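/- (Discrete Schauder estimate, ℓ^∞ case) Let 0 < α < 1, h > 0, and u : ℤ_h → ℝ bounded with ∑_{m=0}^∞ |u((m±n)h)|/(1+m)^{1-α} < ∞ for all n ∈ ℤ. Then (δ_right)^{-α} u(nh) = h^α ∑_{m=n}^∞ Λ^{-α}(m−n) u(mh) satisfies |(δ_right)^{-α}u(nh) − (δ_right)^{-α}u(lh)| ≤ C ‖u‖_∞ h^α |n−l|^α for all n, l ∈ ℤ, with C independent of h and u. -/

import Mathlib

open scoped BigOperators

/-- `Lam α m` is the kernel `Λ^{-α}(m) = α(α+1)⋯(α+m-1)/m!`, with `Lam α 0 = 1`. -/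
noncomputable def Lam (α : ℝ) (m : ℕ) : ℝ :=
  (∏ i ∈ Finset.range m, (α + i)) / (Nat.factorial m)

lemma Lam_zero (α : ℝ) : Lam α 0 = 1 := by simp [Lam]

lemma Lam_succ (α : ℝ) (m : ℕ) :
    Lam α (m + 1) = Lam α m * ((α + m) / (m + 1)) := by
  have hm : ((m+1).factorial : ℝ) = ((m:ℝ)+1) * m.factorial := by
    rw [Nat.factorial_succ]; push_cast; ring
  rw [Lam, Lam, Finset.prod_range_succ, hm, div_mul_div_comm, mul_comm ((m:ℝ)+1) _]

lemma Lam_nonneg {α : ℝ} (h0 : 0 < α) (m : ℕ) : 0 ≤ Lam α m := by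
  apply div_nonneg _ (by positivity)
  exact Finset.prod_nonneg fun i _ => by positivity

lemma Lam_anti {α : ℝ} (h0 : 0 < α) (h1 : α < 1) : Antitone (Lam α) := by
  apply antitone_nat_of_succ_le
  intro m
  rw [Lam_succ]
  have h2 : (α + m) / (m + 1) ≤ 1 := by
    rw [div_le_one (by positivity)]; linarith
  calc Lam α m * ((α + m) / (m + 1)) ≤ Lam α m * 1 :=
        mul_le_mul_of_nonneg_left h2 (Lam_nonneg h0 m)
    _ = Lam α m := mul_one _

/-- key Bernoulli consequence -/
lemma key_bern {α : ℝ} (h0 : 0 < α) (h1 : α < 1) {a : ℝ} (ha : 1 ≤ a) :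
    (a + 1) ^ (1 - α) ≤ a ^ (1 - α) * ((a + 1 - α) / a) := by
  have ha0 : 0 < a := by linarith
  have hinv : (0:ℝ) ≤ 1 / a := by positivity
  have h : a + 1 = a * (1 + 1 / a) := by field_simp
  have hb : (1 + 1 / a) ^ (1 - α) ≤ 1 + (1 - α) * (1 / a) :=
    rpow_one_add_le_one_add_mul_self (by linarith) (by linarith) (by linarith)
  calc (a + 1) ^ (1 - α) = (a * (1 + 1 / a)) ^ (1 - α) := by rw [← h]
    _ = a ^ (1 - α) * (1 + 1 / a) ^ (1 - α) :=
        Real.mul_rpow (le_of_lt ha0) (by positivity)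
    _ ≤ a ^ (1 - α) * (1 + (1 - α) * (1 / a)) :=
        mul_le_mul_of_nonneg_left hb (Real.rpow_nonneg (le_of_lt ha0) _)
    _ = a ^ (1 - α) * ((a + 1 - α) / a) := by
        have he : 1 + (1 - α) * (1 / a) = (a + 1 - α) / a := by
          field_simp
          ring
        rw [he]

lemma Lam_le {α : ℝ} (h0 : 0 < α) (h1 : α < 1) (m : ℕ) :
    Lam α m ≤ ((m : ℝ) + 1) ^ (α - 1) := by
  induction m with
  | zero => simp [Lam_zero]
  | succ k ih =>
    have hk1 : (0:ℝ) < (k:ℝ) + 1 := by positivity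
    have hk2 : (0:ℝ) < (k:ℝ) + 2 := by positivity
    rw [Lam_succ]
    have hfac : (0:ℝ) ≤ (α + k) / (k + 1) := by positivity
    have step1 : Lam α k * ((α + k) / (k + 1)) ≤ ((k:ℝ)+1)^(α-1) * ((α + k) / (k + 1)) :=
      mul_le_mul_of_nonneg_right ih hfac
    refine step1.trans ?_
    -- rewrite x^(α-1) = x / x^(1-α)... use x^(α-1) = (x^(1-α))⁻¹
    have e1 : ((k:ℝ)+1)^(α-1) = (((k:ℝ)+1)^(1-α))⁻¹ := by
      rw [← Real.rpow_neg (le_of_lt hk1)]; ring_nf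
    have e2 : ((k:ℝ)+1+1)^(α-1) = (((k:ℝ)+1+1)^(1-α))⁻¹ := by
      rw [← Real.rpow_neg (by positivity)]; ring_nf
    have hcast : ((k+1 : ℕ) : ℝ) + 1 = (k:ℝ) + 1 + 1 := by push_cast; ring
    rw [hcast, e1, e2]
    have hp1 : (0:ℝ) < ((k:ℝ)+1)^(1-α) := Real.rpow_pos_of_pos hk1 _
    have hp2 : (0:ℝ) < ((k:ℝ)+1+1)^(1-α) := Real.rpow_pos_of_pos (by linarith) _
    set A := ((k:ℝ)+1)^(1-α) with hA
    set B := ((k:ℝ)+1+1)^(1-α) with hB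
    have hkey : B * ((k:ℝ)+1) ≤ A * (((k:ℝ)+1) + 1 - α) := by
      have h := key_bern h0 h1 (a := (k:ℝ)+1) (by linarith)
      calc B * ((k:ℝ)+1) ≤ (A * ((((k:ℝ)+1) + 1 - α) / ((k:ℝ)+1))) * ((k:ℝ)+1) :=
            mul_le_mul_of_nonneg_right h (le_of_lt hk1)
        _ = A * (((k:ℝ)+1) + 1 - α) := by field_simp
    have heq : A⁻¹ * ((α + k) / ((k:ℝ)+1)) = (α + k) / (A * ((k:ℝ)+1)) := by
      field_simp
    rw [heq, show B⁻¹ = 1/B from (one_div B).symm,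
      div_le_div_iff₀ (by positivity) hp2]
    have hmain : (α + (k:ℝ)) * (((k:ℝ)+1) + 1 - α) ≤ ((k:ℝ)+1)^2 := by
      nlinarith [sq_nonneg (1 - α)]
    -- goal : (α + k) * B ≤ 1 * (A * ((k:ℝ)+1))
    have hαk : (0:ℝ) ≤ α + k := by positivity
    nlinarith [mul_le_mul_of_nonneg_left hkey hαk,
      mul_le_mul_of_nonneg_left hmain (le_of_lt hp1), hp1.le, hk1]

lemma sum_rpow_le {α : ℝ} (h0 : 0 < α) (h1 : α < 1) :
    ∀ k : ℕ, ∑ j ∈ Finset.range k, ((j : ℝ) + 1) ^ (α - 1) ≤ (k : ℝ) ^ α / α := by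
  intro k
  induction k with
  | zero =>
    simp [Real.zero_rpow (ne_of_gt h0)]
  | succ k ih =>
    rw [Finset.sum_range_succ]
    rcases Nat.eq_zero_or_pos k with rfl | hk
    · simp only [Finset.range_zero, Finset.sum_empty, Nat.cast_zero, zero_add, Nat.cast_one]
      rw [Real.one_rpow, Real.one_rpow]
      have : (1:ℝ) ≤ 1 / α := by
        rw [le_div_iff₀ h0]; linarith
      linarith
    · have hk1 : (1:ℝ) ≤ (k:ℝ) := by exact_mod_cast hk
      have hk0 : (0:ℝ) < (k:ℝ) := by linarith
      have hkk : (0:ℝ) < (k:ℝ) + 1 := by linarith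
      set A := ((k:ℝ)) ^ (1 - α) with hA
      set B := ((k:ℝ) + 1) ^ (1 - α) with hB
      have hApos : 0 < A := Real.rpow_pos_of_pos hk0 _
      have hBpos : 0 < B := Real.rpow_pos_of_pos hkk _
      have e1 : (k:ℝ) ^ α * A = (k:ℝ) := by
        rw [hA, ← Real.rpow_add hk0]; norm_num
      have e2 : ((k:ℝ) + 1) ^ α * B = (k:ℝ) + 1 := by
        rw [hB, ← Real.rpow_add hkk]; norm_num
      have e3 : ((k:ℝ) + 1) ^ (α - 1) * B = 1 := by
        rw [hB, ← Real.rpow_add hkk]; norm_num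
      have hkey : B * (k:ℝ) ≤ A * ((k:ℝ) + 1 - α) := by
        have h := key_bern h0 h1 (a := (k:ℝ)) hk1
        calc B * (k:ℝ) ≤ (A * (((k:ℝ) + 1 - α) / (k:ℝ))) * (k:ℝ) :=
              mul_le_mul_of_nonneg_right h (le_of_lt hk0)
          _ = A * ((k:ℝ) + 1 - α) := by field_simp
      have G : α * ((k:ℝ) + 1) ^ (α - 1) + (k:ℝ) ^ α ≤ ((k:ℝ) + 1) ^ α := by
        have hmul : (α * ((k:ℝ) + 1) ^ (α - 1) + (k:ℝ) ^ α) * (A * B) ≤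
            ((k:ℝ) + 1) ^ α * (A * B) := by
          have l1 : (α * ((k:ℝ) + 1) ^ (α - 1) + (k:ℝ) ^ α) * (A * B)
              = α * (((k:ℝ) + 1) ^ (α - 1) * B) * A + ((k:ℝ) ^ α * A) * B := by ring
          have l2 : ((k:ℝ) + 1) ^ α * (A * B) = (((k:ℝ) + 1) ^ α * B) * A := by ring
          rw [l1, l2, e1, e2, e3]
          nlinarith [hkey]
        exact le_of_mul_le_mul_right hmul (mul_pos hApos hBpos)
      have goalNat : ((k+1 : ℕ) : ℝ) = (k:ℝ) + 1 := by push_cast; ring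
      rw [goalNat]
      have : (k:ℝ) ^ α / α + ((k:ℝ) + 1) ^ (α - 1) ≤ ((k:ℝ) + 1) ^ α / α := by
        rw [div_add' _ _ _ (ne_of_gt h0), div_le_div_iff₀ h0 h0]
        nlinarith [G]
      linarith [ih]

lemma sum_Lam_le {α : ℝ} (h0 : 0 < α) (h1 : α < 1) (k : ℕ) :
    ∑ j ∈ Finset.range k, Lam α j ≤ (k : ℝ) ^ α / α := by
  refine le_trans (Finset.sum_le_sum fun j _ => Lam_le h0 h1 j) (sum_rpow_le h0 h1 k)

lemma Lam_le_inv {α : ℝ} (h0 : 0 < α) (h1 : α < 1) (j : ℕ) :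
    Lam α j ≤ ((1 + (j:ℝ)) ^ (1 - α))⁻¹ := by
  have := Lam_le h0 h1 j
  rwa [show (α - 1 : ℝ) = -(1 - α) by ring,
    Real.rpow_neg (by positivity), show ((j:ℝ) + 1) = 1 + (j:ℝ) by ring] at this

lemma summable_main {α : ℝ} (h0 : 0 < α) (h1 : α < 1) (u : ℤ → ℝ) (n : ℤ)
    (hs : Summable (fun m : ℕ => |u (n + m)| / (1 + (m : ℝ)) ^ (1 - α))) :
    Summable (fun j : ℕ => Lam α j * u (n + j)) := by
  refine Summable.of_abs (Summable.of_nonneg_of_le (fun j => abs_nonneg _) (fun j => ?_) hs)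
  rw [abs_mul, abs_of_nonneg (Lam_nonneg h0 j), div_eq_mul_inv, mul_comm]
  exact mul_le_mul_of_nonneg_left (Lam_le_inv h0 h1 j) (abs_nonneg _)

set_option maxHeartbeats 1000000 in
lemma key_diff {α : ℝ} (h0 : 0 < α) (h1 : α < 1) (u : ℤ → ℝ) (M : ℝ)
    (hM : ∀ m : ℤ, |u m| ≤ M)
    (hsum : ∀ n : ℤ, Summable (fun j : ℕ => Lam α j * u (n + j)))
    (n : ℤ) (k : ℕ) :
    |(∑' j : ℕ, Lam α j * u (n + j)) - ∑' j : ℕ, Lam α j * u ((n + k) + j)| ≤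
      2 / α * M * (k : ℝ) ^ α := by
  have hM0 : 0 ≤ M := le_trans (abs_nonneg _) (hM 0)
  set f : ℕ → ℝ := fun j => Lam α j * u (n + j) with hf
  set g : ℕ → ℝ := fun j => Lam α j * u ((n + k) + j) with hg
  have hfs : Summable f := hsum n
  have hgs : Summable g := hsum (n + k)
  have hfks : Summable (fun j => f (j + k)) := (summable_nat_add_iff k).2 hfs
  -- split
  have hsplit : ∑ i ∈ Finset.range k, f i + ∑' i, f (i + k) = ∑' i, f i :=
    Summable.sum_add_tsum_nat_add k hfs
  set D := ∑ j ∈ Finset.range k, Lam α j with hD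
  have hDα : D ≤ (k : ℝ) ^ α / α := sum_Lam_le h0 h1 k
  -- the difference sequence
  set d : ℕ → ℝ := fun i => Lam α i - Lam α (i + k) with hd
  have hd0 : ∀ i, 0 ≤ d i := fun i =>
    sub_nonneg.2 (Lam_anti h0 h1 (Nat.le_add_right i k))
  have hdsum_bound : ∀ N, ∑ i ∈ Finset.range N, d i ≤ D := by
    intro N
    have e : ∑ i ∈ Finset.range N, Lam α (i + k)
        = ∑ i ∈ Finset.range (k + N), Lam α i - D := by
      rw [Finset.sum_range_add (Lam α) k N]
      simp only [hD]
      have : ∀ i, Lam α (k + i) = Lam α (i + k) := fun i => by rw [add_comm]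
      rw [Finset.sum_congr rfl fun i _ => this i]
      ring
    have hsub : ∑ i ∈ Finset.range N, Lam α i ≤ ∑ i ∈ Finset.range (k + N), Lam α i := by
      apply Finset.sum_le_sum_of_subset_of_nonneg
      · exact Finset.range_subset_range.2 (Nat.le_add_left N k)
      · intro i _ _; exact Lam_nonneg h0 i
    have : ∑ i ∈ Finset.range N, d i
        = ∑ i ∈ Finset.range N, Lam α i - ∑ i ∈ Finset.range N, Lam α (i + k) := by
      rw [← Finset.sum_sub_distrib]
    rw [this, e]
    linarith
  have hdsummable : Summable d := summable_of_sum_range_le hd0 hdsum_bound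
  have hdtsum : ∑' i, d i ≤ D := Summable.tsum_le_of_sum_range_le hdsummable hdsum_bound
  -- pointwise identity f (i+k) - g i = -(d i) * u ((n+k)+i)
  have hpt : ∀ i : ℕ, f (i + k) - g i = (Lam α (i + k) - Lam α i) * u ((n + k) + i) := by
    intro i
    have hc : n + ((i + k : ℕ) : ℤ) = (n + k) + i := by push_cast; ring
    simp only [hf, hg, hc]
    ring
  -- bound the finite part
  have hfin : |∑ i ∈ Finset.range k, f i| ≤ M * D := by
    refine le_trans (Finset.abs_sum_le_sum_abs _ _) ?_
    rw [hD, Finset.mul_sum]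
    apply Finset.sum_le_sum
    intro i _
    rw [hf, abs_mul, abs_of_nonneg (Lam_nonneg h0 i), mul_comm]
    exact mul_le_mul_of_nonneg_right (hM _) (Lam_nonneg h0 i)
  -- bound the tail part
  have htail_summable : Summable (fun i => f (i + k) - g i) := hfks.sub hgs
  have habs_le : ∀ i, |f (i + k) - g i| ≤ M * d i := by
    intro i
    rw [hpt i, abs_mul]
    have h1' : |Lam α (i + k) - Lam α i| = d i := by
      rw [abs_sub_comm, abs_of_nonneg (hd0 i)]
    rw [h1', mul_comm (d i) _]
    exact mul_le_mul_of_nonneg_right (hM _) (hd0 i)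
  have habs_summable : Summable (fun i => |f (i + k) - g i|) :=
    Summable.of_nonneg_of_le (fun i => abs_nonneg _) habs_le (hdsummable.mul_left M)
  have htail : |∑' i, (f (i + k) - g i)| ≤ M * D := by
    calc |∑' i, (f (i + k) - g i)| ≤ ∑' i, |f (i + k) - g i| := by
          have h := norm_tsum_le_tsum_norm (f := fun i => f (i + k) - g i)
            (by simpa only [Real.norm_eq_abs] using habs_summable)
          simpa only [Real.norm_eq_abs] using h
      _ ≤ ∑' i, M * d i := Summable.tsum_le_tsum habs_le habs_summable (hdsummable.mul_left M)
      _ = M * ∑' i, d i := tsum_mul_left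
      _ ≤ M * D := mul_le_mul_of_nonneg_left hdtsum hM0
  -- assemble
  have hdecomp : (∑' i, f i) - ∑' i, g i
      = ∑ i ∈ Finset.range k, f i + ∑' i, (f (i + k) - g i) := by
    rw [Summable.tsum_sub hfks hgs, ← hsplit]
    ring
  rw [hdecomp]
  calc |∑ i ∈ Finset.range k, f i + ∑' i, (f (i + k) - g i)|
      ≤ |∑ i ∈ Finset.range k, f i| + |∑' i, (f (i + k) - g i)| := abs_add_le _ _
    _ ≤ M * D + M * D := add_le_add hfin htail
    _ ≤ 2 / α * M * (k : ℝ) ^ α := by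
        have : M * D ≤ M * ((k : ℝ) ^ α / α) := mul_le_mul_of_nonneg_left hDα hM0
        have h2 : 2 / α * M * (k : ℝ) ^ α = 2 * (M * ((k : ℝ) ^ α / α)) := by
          field_simp
        rw [h2]
        linarith

/-- Discrete Schauder estimate, `ℓ^∞` case: for bounded `u ∈ ℓ_{-α,h}`,
`|(δ_right)^{-α}u(nh) − (δ_right)^{-α}u(lh)| ≤ C ‖u‖_∞ h^α |n−l|^α`,
with `C` independent of `h` and `u`. Here `u n` is the value of `u` at `nh`. -/
theorem discrete_schauder_linfty (α : ℝ) (h0 : 0 < α) (h1 : α < 1) :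
    ∃ C > 0, ∀ (h : ℝ), 0 < h → ∀ (u : ℤ → ℝ) (M : ℝ),
      (∀ m : ℤ, |u m| ≤ M) →
      (∀ n : ℤ, Summable (fun m : ℕ => |u (n + m)| / (1 + (m : ℝ)) ^ (1 - α)) ∧
        Summable (fun m : ℕ => |u (n - m)| / (1 + (m : ℝ)) ^ (1 - α))) →
      ∀ n l : ℤ,
        |(h ^ α * ∑' j : ℕ, Lam α j * u (n + j)) -
            (h ^ α * ∑' j : ℕ, Lam α j * u (l + j))| ≤
          C * M * h ^ α * |(n : ℝ) - l| ^ α := by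
  refine ⟨2 / α, by positivity, ?_⟩
  intro h hh u M hM hs n l
  have hsum : ∀ n : ℤ, Summable (fun j : ℕ => Lam α j * u (n + j)) :=
    fun n => summable_main h0 h1 u n (hs n).1
  have hpow : 0 < h ^ α := Real.rpow_pos_of_pos hh α
  have main := key_diff h0 h1 u M hM hsum
  have key : |(∑' j : ℕ, Lam α j * u (n + j)) - ∑' j : ℕ, Lam α j * u (l + j)| ≤
      2 / α * M * |(n : ℝ) - l| ^ α := by
    rcases le_total l n with hln | hnl
    · set k := (n - l).toNat with hk
      have hkz : ((k : ℕ) : ℤ) = n - l := Int.toNat_of_nonneg (by omega)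
      have hn : n = l + (k : ℤ) := by omega
      have hcast : ((k : ℕ) : ℝ) = (n : ℝ) - (l : ℝ) := by exact_mod_cast congrArg (Int.cast : ℤ → ℝ) hkz
      have habs : |(n : ℝ) - l| = (k : ℝ) := by
        rw [← hcast, abs_of_nonneg (by positivity)]
      have hmain := main l k
      rw [← hn] at hmain
      rw [habs, abs_sub_comm]
      exact hmain
    · set k := (l - n).toNat with hk
      have hkz : ((k : ℕ) : ℤ) = l - n := Int.toNat_of_nonneg (by omega)
      have hl : l = n + (k : ℤ) := by omega
      have hcast : ((k : ℕ) : ℝ) = (l : ℝ) - (n : ℝ) := by exact_mod_cast congrArg (Int.cast : ℤ → ℝ) hkz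
      have habs : |(n : ℝ) - l| = (k : ℝ) := by
        rw [abs_sub_comm, ← hcast, abs_of_nonneg (by positivity)]
      have hmain := main n k
      rw [← hl] at hmain
      rw [habs]
      exact hmain
  calc |(h ^ α * ∑' j : ℕ, Lam α j * u (n + j)) -
            (h ^ α * ∑' j : ℕ, Lam α j * u (l + j))|
      = h ^ α * |(∑' j : ℕ, Lam α j * u (n + j)) - ∑' j : ℕ, Lam α j * u (l + j)| := by
        rw [← mul_sub, abs_mul, abs_of_pos hpow]
    _ ≤ h ^ α * (2 / α * M * |(n : ℝ) - l| ^ α) :=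
        mul_le_mul_of_nonneg_left key hpow.le
    _ = 2 / α * M * h ^ α * |(n : ℝ) - l| ^ α := by ring
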